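/- Let G_1 and G_2 be finite simple graphs sharing the vertex set I = V(G_1) ∩ V(G_2) and the edges induced by I. If G_1 and G_2 are simultaneous interval graphs, then there exist clique orderings O_1 = Q_1, …, Q_l of G_1 and O_2 = Q'_1, …, Q'_l of G_2 of the same length such that for every vertex v ∈ I and every index i, v ∈ Q_i if and only if v ∈ Q'_i. -/

import Mathlib

variable {U : Type*}

/-- `Q` is a maximal clique of `G` among the cliques contained in the
vertex set `W`; i.e. a maximal clique of the induced subgraph `G[W]`. -/
def IsMaxCliqueOn (G : SimpleGraph U) (W : Finset U) (Q : Finset U) : Prop :=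
  Q ⊆ W ∧ G.IsClique (Q : Set U) ∧
    ∀ R : Finset U, R ⊆ W → G.IsClique (R : Set U) → Q ⊆ R → Q = R

/-- `S` is a clique ordering of the graph `G` regarded as a graph on the vertex
set `W`: a finite sequence of (possibly empty) cliques contained in `W`,
containing every maximal clique of `G[W]`, in which the indices of cliques
containing any fixed vertex are consecutive. -/
def IsCliqueOrderingOn (G : SimpleGraph U) (W : Finset U) (S : List (Finset U)) : Prop :=
  (∀ Q ∈ S, Q ⊆ W ∧ G.IsClique (Q : Set U)) ∧
  (∀ Q : Finset U, IsMaxCliqueOn G W Q → Q ∈ S) ∧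
  (∀ v : U, ∀ i j k : ℕ, i ≤ j → j ≤ k → k < S.length →
    v ∈ S.getD i ∅ → v ∈ S.getD k ∅ → v ∈ S.getD j ∅)

/-- `G1` (on vertex set `V1`) and `G2` (on vertex set `V2`) are simultaneous
interval graphs: they admit interval representations (by nonempty closed real
intervals, adjacency iff intersecting) that assign the same interval to every
vertex of `I = V1 ∩ V2`. -/
def SimultaneousIntervalGraphs [DecidableEq U] (V1 V2 : Finset U) (G1 G2 : SimpleGraph U) : Prop :=
  ∃ a1 b1 a2 b2 : U → ℝ,
    (∀ v ∈ V1, a1 v ≤ b1 v) ∧ (∀ v ∈ V2, a2 v ≤ b2 v) ∧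
    (∀ u ∈ V1, ∀ v ∈ V1, u ≠ v →
      (G1.Adj u v ↔ (Set.Icc (a1 u) (b1 u) ∩ Set.Icc (a1 v) (b1 v)).Nonempty)) ∧
    (∀ u ∈ V2, ∀ v ∈ V2, u ≠ v →
      (G2.Adj u v ↔ (Set.Icc (a2 u) (b2 u) ∩ Set.Icc (a2 v) (b2 v)).Nonempty)) ∧
    (∀ v ∈ V1 ∩ V2, a1 v = a2 v ∧ b1 v = b2 v)

/-- Auxiliary: the list of "point cliques" along a sorted list of points that
contains all left endpoints (and 0) is a clique ordering. -/
lemma ordering_aux {U : Type*} [DecidableEq U] (V : Finset U) (G : SimpleGraph U)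
    (a b : U → ℝ) (hab : ∀ v ∈ V, a v ≤ b v)
    (hadj : ∀ u ∈ V, ∀ v ∈ V, u ≠ v →
      (G.Adj u v ↔ (Set.Icc (a u) (b u) ∩ Set.Icc (a v) (b v)).Nonempty))
    (P : List ℝ) (hPs : P.Pairwise (· ≤ ·)) (hP : ∀ v ∈ V, a v ∈ P) (h0 : (0:ℝ) ∈ P) :
    IsCliqueOrderingOn G V (P.map (fun p => V.filter (fun v => a v ≤ p ∧ p ≤ b v))) := by
  classical
  set f : ℝ → Finset U := fun p => V.filter (fun v => a v ≤ p ∧ p ≤ b v) with hf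
  -- every value of f is a clique contained in V
  have hclique : ∀ p : ℝ, (f p) ⊆ V ∧ G.IsClique ((f p : Set U)) := by
    intro p
    constructor
    · exact Finset.filter_subset _ _
    · intro u hu v hv hne
      simp only [Finset.coe_filter, Set.mem_setOf_eq, hf] at hu hv
      exact (hadj u hu.1 v hv.1 hne).2
        ⟨p, ⟨hu.2.1, hu.2.2⟩, ⟨hv.2.1, hv.2.2⟩⟩
  refine ⟨?_, ?_, ?_⟩
  · intro Q hQ
    obtain ⟨p, _, rfl⟩ := List.mem_map.1 hQ
    exact hclique p
  · -- every maximal clique appears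
    intro Q hQ
    obtain ⟨hQV, hQc, hQmax⟩ := hQ
    rcases Q.eq_empty_or_nonempty with rfl | ⟨v0', hv0'⟩
    · have : (∅ : Finset U) = f 0 :=
        hQmax _ (hclique 0).1 (hclique 0).2 (Finset.empty_subset _)
      rw [this]
      exact List.mem_map.2 ⟨0, h0, rfl⟩
    · obtain ⟨v0, hv0, hmax⟩ := Q.exists_max_image a ⟨v0', hv0'⟩
      set p := a v0 with hp
      have hsub : Q ⊆ f p := by
        intro v hv
        have hvV : v ∈ V := hQV hv
        refine Finset.mem_filter.2 ⟨hvV, hmax v hv, ?_⟩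
        by_cases hvv : v = v0
        · subst hvv; exact hab v hvV
        · have hadjv : G.Adj v0 v := hQc hv0 hv (fun h => hvv h.symm)
          obtain ⟨x, hx1, hx2⟩ := (hadj v0 (hQV hv0) v hvV (fun h => hvv h.symm)).1 hadjv
          exact le_trans hx1.1 hx2.2
      have : Q = f p := hQmax _ (hclique p).1 (hclique p).2 hsub
      rw [this]
      exact List.mem_map.2 ⟨p, hP v0 (hQV hv0), rfl⟩
  · -- consecutiveness
    intro v i j k hij hjk hk hvi hvk
    rw [List.length_map] at hk
    have hj : j < P.length := lt_of_le_of_lt hjk hk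
    have hi : i < P.length := lt_of_le_of_lt hij hj
    have hget : ∀ m (hm : m < P.length),
        (P.map f).getD m ∅ = f (P.get ⟨m, hm⟩) := by
      intro m hm
      rw [List.getD_eq_getElem _ _ (by simpa using hm)]
      simp
    rw [hget i hi] at hvi
    rw [hget k hk] at hvk
    rw [hget j hj]
    have h1 : P.get ⟨i, hi⟩ ≤ P.get ⟨j, hj⟩ := hPs.rel_get_of_le hij
    have h2 : P.get ⟨j, hj⟩ ≤ P.get ⟨k, hk⟩ := hPs.rel_get_of_le hjk
    simp only [hf, Finset.mem_filter] at hvi hvk ⊢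
    exact ⟨hvi.1, le_trans hvi.2.1 h1, le_trans h2 hvk.2.2⟩

/-- If two graphs sharing the vertex set `I = V1 ∩ V2` (and its induced edges)
are simultaneous interval graphs, then they admit clique orderings of the same
length that agree on `I` position-wise. -/
theorem agreeing_orderings_of_simultaneous {U : Type*} [Fintype U] [DecidableEq U]
    (V1 V2 : Finset U) (G1 G2 : SimpleGraph U)
    (hG1 : ∀ u v : U, G1.Adj u v → u ∈ V1 ∧ v ∈ V1)
    (hG2 : ∀ u v : U, G2.Adj u v → u ∈ V2 ∧ v ∈ V2)
    (hI : ∀ u ∈ V1 ∩ V2, ∀ v ∈ V1 ∩ V2, G1.Adj u v ↔ G2.Adj u v)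
    (hsim : SimultaneousIntervalGraphs V1 V2 G1 G2) :
    ∃ O1 O2 : List (Finset U),
      IsCliqueOrderingOn G1 V1 O1 ∧ IsCliqueOrderingOn G2 V2 O2 ∧
      O1.length = O2.length ∧
      ∀ v ∈ V1 ∩ V2, ∀ i : ℕ, i < O1.length →
        (v ∈ O1.getD i ∅ ↔ v ∈ O2.getD i ∅) := by
  classical
  obtain ⟨a1, b1, a2, b2, h1, h2, hadj1, hadj2, hagree⟩ := hsim
  set A : Finset ℝ := insert 0 (V1.image a1 ∪ V2.image a2) with hA
  set P : List ℝ := A.sort (· ≤ ·) with hPdef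
  have hPs : P.Pairwise (· ≤ ·) := Finset.pairwise_sort _ _
  have h0P : (0:ℝ) ∈ P := (Finset.mem_sort _).2 (Finset.mem_insert_self _ _)
  have hP1 : ∀ v ∈ V1, a1 v ∈ P := fun v hv => (Finset.mem_sort _).2
    (Finset.mem_insert_of_mem (Finset.mem_union_left _ (Finset.mem_image_of_mem _ hv)))
  have hP2 : ∀ v ∈ V2, a2 v ∈ P := fun v hv => (Finset.mem_sort _).2
    (Finset.mem_insert_of_mem (Finset.mem_union_right _ (Finset.mem_image_of_mem _ hv)))
  refine ⟨P.map (fun p => V1.filter (fun v => a1 v ≤ p ∧ p ≤ b1 v)),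
         P.map (fun p => V2.filter (fun v => a2 v ≤ p ∧ p ≤ b2 v)),
         ordering_aux V1 G1 a1 b1 h1 hadj1 P hPs hP1 h0P,
         ordering_aux V2 G2 a2 b2 h2 hadj2 P hPs hP2 h0P,
         by simp, ?_⟩
  intro v hv i hi
  rw [List.length_map] at hi
  have hget : ∀ (g : ℝ → Finset U),
      (P.map g).getD i ∅ = g (P.get ⟨i, hi⟩) := by
    intro g
    rw [List.getD_eq_getElem _ _ (by simpa using hi)]
    simp
  rw [hget, hget]
  obtain ⟨ha, hb⟩ := hagree v hv
  obtain ⟨hv1, hv2⟩ := Finset.mem_inter.1 hv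
  simp only [Finset.mem_filter, ha, hb, hv1, hv2, true_and]
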